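/- The Table II mapping P is distance invariant: for all symbols s, s' ∈ F₂², d_H(P(s), P(s')) = w(s + s'), where w(0,0) = 0, w(0,1) = w(1,0) = 4, and w(1,1) = 6. Consequently, for every input length L ≥ 1, the expanded (7,5) permutation trellis code obtained by encoding the L input bits followed by two zero flush bits and applying P to each of the L+2 output symbols satisfies: for every integer d ≥ 0 and any two input sequences a, b ∈ F₂^L, the number of input sequences u ∈ F₂^L whose expanded codeword is at Hamming distance d from the expanded codeword of a equals the number of input sequences whose expanded codeword is at Hamming distance d from the expanded codeword of b. In particular, the number a_d of expanded codewords at distance d from a transmitted expanded codeword is independent of the transmitted codeword. -/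

import Mathlib

/-- Next state of the rate-1/2 (7,5) convolutional encoder: on input `u` from
state `(s₁, s₂)` the encoder moves to state `(u, s₁)`. -/
def nextState (u : ZMod 2) (s : ZMod 2 × ZMod 2) : ZMod 2 × ZMod 2 :=
  (u, s.1)

/-- Output symbol of the rate-1/2 (7,5) convolutional encoder: on input `u`
from state `(s₁, s₂)` the encoder outputs `(u + s₁ + s₂, u + s₂)`. -/
def outSym (u : ZMod 2) (s : ZMod 2 × ZMod 2) : ZMod 2 × ZMod 2 :=
  (u + s.1 + s.2, u + s.2)

/-- The sequence of states visited (after each input bit) when feeding the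
input list `us` to the encoder started in state `s`. -/
def encStates : ZMod 2 × ZMod 2 → List (ZMod 2) → List (ZMod 2 × ZMod 2)
  | _, [] => []
  | s, u :: us => nextState u s :: encStates (nextState u s) us

/-- The sequence of output symbols produced when feeding the input list `us`
to the encoder started in state `s`. -/
def encOutputs : ZMod 2 × ZMod 2 → List (ZMod 2) → List (ZMod 2 × ZMod 2)
  | _, [] => []
  | s, u :: us => outSym u s :: encOutputs (nextState u s) us

/-- The Table II mapping `P` from output symbols to 3×3 permutation words:
`(0,0) ↦ 231`, `(0,1) ↦ 213`, `(1,0) ↦ 132`, `(1,1) ↦ 123` (0-indexed, the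
word is the function `k ↦ w_k`). -/
def tableP (s : ZMod 2 × ZMod 2) : Fin 3 → Fin 3 :=
  if s = (0, 0) then ![1, 2, 0]
  else if s = (0, 1) then ![1, 0, 2]
  else if s = (1, 0) then ![0, 2, 1]
  else ![0, 1, 2]

/-- The 3×3 permutation code matrix of an output symbol: entry `(j,k)` is
`true` iff `w_k = j` for the Table II word `w` of the symbol. -/
def Pmat (s : ZMod 2 × ZMod 2) : Fin 3 × Fin 3 → Bool :=
  fun jk => decide (tableP s jk.2 = jk.1)

/-- The symbol weight `w`: `w(0,0) = 0`, `w(0,1) = w(1,0) = 4`, `w(1,1) = 6`. -/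
def wgt (s : ZMod 2 × ZMod 2) : ℕ :=
  if s = (0, 0) then 0 else if s = (1, 1) then 6 else 4

/-- The expanded codeword of an input sequence `u` of length `L`: encode the
`L` input bits followed by two zero flush bits and map each of the `L + 2`
output symbols to its 3×3 permutation code matrix. -/
def encExp {L : ℕ} (u : Fin L → ZMod 2) : List (ZMod 2 × ZMod 2) :=
  encOutputs (0, 0) (List.ofFn u ++ [0, 0])

/-- Hamming distance between two expanded codewords (concatenations of 3×3
permutation code matrices): the sum, over the symbol positions, of the entrywise
Hamming distances of the corresponding permutation code matrices. -/
def ecDist (xs ys : List (ZMod 2 × ZMod 2)) : ℕ :=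
  (List.zipWith (fun a b => hammingDist (Pmat a) (Pmat b)) xs ys).sum


lemma distInv : ∀ s s' : ZMod 2 × ZMod 2, hammingDist (Pmat s) (Pmat s') = wgt (s + s') := by
  decide

lemma outSym_add (u u' : ZMod 2) (s s' : ZMod 2 × ZMod 2) :
    outSym u s + outSym u' s' = outSym (u + u') (s + s') := by
  simp [outSym, Prod.ext_iff]
  constructor <;> ring

lemma nextState_add (u u' : ZMod 2) (s s' : ZMod 2 × ZMod 2) :
    nextState u s + nextState u' s' = nextState (u + u') (s + s') := rfl

lemma encOutputs_add : ∀ (us us' : List (ZMod 2)) (s s' : ZMod 2 × ZMod 2),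
    us.length = us'.length →
    List.zipWith (· + ·) (encOutputs s us) (encOutputs s' us')
      = encOutputs (s + s') (List.zipWith (· + ·) us us')
  | [], [], _, _, _ => rfl
  | u :: us, u' :: us', s, s', h => by
    simp only [encOutputs, List.zipWith, outSym_add, nextState_add]
    rw [encOutputs_add us us' _ _ (by simpa using h)]
    rfl


lemma encOutputs_length : ∀ (s : ZMod 2 × ZMod 2) (us : List (ZMod 2)),
    (encOutputs s us).length = us.length
  | _, [] => rfl
  | s, u :: us => by simp [encOutputs, encOutputs_length _ us]

lemma ofFn_zip_add {L : ℕ} (u a : Fin L → ZMod 2) :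
    List.zipWith (· + ·) (List.ofFn u) (List.ofFn a) = List.ofFn (u + a) := by
  apply List.ext_getElem <;> simp

lemma ecDist_encExp {L : ℕ} (u a : Fin L → ZMod 2) :
    ecDist (encExp u) (encExp a) = ((encExp (u + a)).map wgt).sum := by
  have hfun : (fun x y : ZMod 2 × ZMod 2 => hammingDist (Pmat x) (Pmat y))
      = fun x y => wgt (x + y) := by
    funext x y; exact distInv x y
  rw [ecDist, hfun, ← List.map_zipWith]
  congr 2
  rw [encExp, encExp, encExp,
    encOutputs_add _ _ _ _ (by simp),
    List.zipWith_append (by simp), ofFn_zip_add]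
  norm_num

lemma addself {L : ℕ} (u a b : Fin L → ZMod 2) : u + (a + b) + b = u + a := by
  funext i
  simp only [Pi.add_apply]
  rw [add_assoc, add_assoc, CharTwo.add_self_eq_zero, add_zero]

/-- The Table II mapping is distance invariant: `d_H(P(s), P(s')) = w(s + s')`.
Consequently the expanded (7,5) permutation trellis code is distance invariant:
for every input length `L ≥ 1`, every `d`, and any input sequences `a, b`, the
number of input sequences whose expanded codeword is at Hamming distance `d`
from the expanded codeword of `a` equals the corresponding number for `b`;
in particular `a_d` is independent of the transmitted codeword. -/
theorem stmt_10 :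
    (∀ s s' : ZMod 2 × ZMod 2, hammingDist (Pmat s) (Pmat s') = wgt (s + s')) ∧
    (∀ L : ℕ, 1 ≤ L → ∀ (d : ℕ) (a b : Fin L → ZMod 2),
      (Finset.univ.filter fun u : Fin L → ZMod 2 =>
          ecDist (encExp u) (encExp a) = d).card
        = (Finset.univ.filter fun u : Fin L → ZMod 2 =>
          ecDist (encExp u) (encExp b) = d).card) := by
  refine ⟨distInv, fun L hL d a b => ?_⟩
  apply Finset.card_equiv (Equiv.addRight (a + b))
  intro u
  simp only [Finset.mem_filter, Finset.mem_univ, true_and, Equiv.coe_addRight]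
  rw [ecDist_encExp, ecDist_encExp, addself]
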